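/- Suppose 0 < ε ≤ 1/6, β = ε, and n, m are nonnegative reals with the following: the algorithm's instantaneous cost is 2n, the potential increases by at most n/ε from OPT's processing, and decreases by at least ((1+6ε)(1-β)/ε)·n − ((1+6ε)(1-β)/(εβ))·m from the algorithm's processing. Then 2n + n/ε − ((1+6ε)(1-β)/ε)·n + ((1+6ε)(1-β)/(εβ))·m ≤ (2/ε²)·m. -/

import Mathlib

/-- Arithmetic core of the running condition (Lemma 3): for `0 < ε ≤ 1/6`,
`β = ε`, and nonnegative `n`, `m`,
`2n + n/ε − ((1+6ε)(1−β)/ε)·n + ((1+6ε)(1−β)/(εβ))·m ≤ (2/ε²)·m`. -/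
theorem stmt_8 (ε β n m : ℝ) (hε0 : 0 < ε) (hε1 : ε ≤ 1 / 6)
    (hβ : β = ε) (hn : 0 ≤ n) (hm : 0 ≤ m) :
    2 * n + n / ε - ((1 + 6 * ε) * (1 - β) / ε) * n
      + ((1 + 6 * ε) * (1 - β) / (ε * β)) * m ≤ (2 / ε ^ 2) * m := by
  subst hβ
  have h2 : (0:ℝ) < β^2 := by positivity
  rw [show (2/β^2*m : ℝ) = 2*m/β^2 by ring, le_div_iff₀ h2]
  have hβ' : β ≠ 0 := ne_of_gt hε0
  field_simp
  have hA : 0 ≤ 3 - 6 * β := by linarith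
  have hB : 0 ≤ 1 - 5 * β + 6 * β ^ 2 := by nlinarith
  have h4 : (0:ℝ) ≤ β ^ 4 := by positivity
  have h3 : (0:ℝ) ≤ β ^ 3 := by positivity
  nlinarith [mul_nonneg (mul_nonneg hn h4) hA, mul_nonneg (mul_nonneg hm h3) hB, mul_nonneg (mul_nonneg hn h2.le) hA, mul_nonneg hm hB]
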